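/- Let Z, Z̃ ∈ ℝ^{m×r} satisfy ‖Z - Z̃‖_{1,2} ≤ ε̄. Then α(Z̃) ≥ α(Z) - 2ε̄, where α(W) = min_{1≤j≤r} min_{x∈Δ} ‖W(:,j) - W(:,J)x‖₂ with J = {1,...,r}\{j}. -/

import Mathlib

noncomputable section

open scoped BigOperators

abbrev E (m : ℕ) := EuclideanSpace ℝ (Fin m)

def toE {m : ℕ} (x : Fin m → ℝ) : E m := WithLp.toLp 2 x

/-- The unit simplex `Δ = {y | y ≥ 0, ∑ y ≤ 1}`. -/
def simplex (n : Type*) [Fintype n] : Set (n → ℝ) :=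
  {y | (∀ i, 0 ≤ y i) ∧ ∑ i, y i ≤ 1}

/-- Assumption 2 of the paper: `f` is `μ`-strongly convex with `L`-Lipschitz
gradient `f'`, and `0` is its global minimizer with `f 0 = 0`. -/
structure GoodF {m : ℕ} (f : E m → ℝ) (f' : E m → E m) (μ L : ℝ) : Prop where
  mu_pos : 0 < μ
  grad : ∀ x, HasGradientAt f (f' x) x
  lip : ∀ x y : E m, ‖f' x - f' y‖ ≤ L * ‖x - y‖
  sconv : ∀ x y : E m, ∀ δ : ℝ, 0 ≤ δ → δ ≤ 1 →
    f (δ • x + (1 - δ) • y) ≤ δ * f x + (1 - δ) * f y - μ / 2 * δ * (1 - δ) * ‖x - y‖ ^ 2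
  f_zero : f 0 = 0
  min_zero : ∀ x, f 0 ≤ f x

/-- A minimizer over the unit simplex of `y ↦ f (x - B y)` (chosen via choice). -/
def argminSimplex {m : ℕ} {n : Type*} [Fintype n] (f : E m → ℝ)
    (B : Matrix (Fin m) n ℝ) (x : E m) : n → ℝ :=
  Classical.epsilon fun y => y ∈ simplex n ∧
    ∀ z ∈ simplex n, f (x - toE (B.mulVec y)) ≤ f (x - toE (B.mulVec z))

/-- The residual `R_B^f(x) = x - B y*` where `y* = argmin_{y ∈ Δ} f (x - B y)`. -/
def resid {m : ℕ} {n : Type*} [Fintype n] (f : E m → ℝ)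
    (B : Matrix (Fin m) n ℝ) (x : E m) : E m :=
  x - toE (B.mulVec (argminSimplex f B x))

/-- Column-wise residual matrix `R_B^f(A)`. -/
def residMat {m : ℕ} {n k : Type*} [Fintype n] (f : E m → ℝ)
    (B : Matrix (Fin m) n ℝ) (A : Matrix (Fin m) k ℝ) : Matrix (Fin m) k ℝ :=
  fun i j => resid f B (toE fun i' => A i' j) i

/-- `‖N‖_{1,2}`: the maximum `ℓ₂` column norm. -/
def norm12 {m : ℕ} {n : Type*} [Fintype n] (N : Matrix (Fin m) n ℝ) : ℝ :=
  sSup {c | ∃ j, c = ‖toE fun i => N i j‖}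

/-- `α(W)`: minimum distance between a column of `W` and the convex hull of the
other columns of `W` and the origin. -/
def alpha {m r : ℕ} (W : Matrix (Fin m) (Fin r) ℝ) : ℝ :=
  sInf {c | ∃ (j : Fin r) (x : Fin r → ℝ), x ∈ simplex (Fin r) ∧ x j = 0 ∧
    c = ‖toE (fun i => W i j) - toE (W.mulVec x)‖}

/-- `σ(W)`: smallest singular value (`min_{‖z‖₂ ≥ 1} ‖Wz‖₂`) if `m ≥ r`, and `0` if `m < r`. -/
def smin {m r : ℕ} (W : Matrix (Fin m) (Fin r) ℝ) : ℝ :=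
  if r ≤ m then sInf {c | ∃ z : Fin r → ℝ, 1 ≤ ‖toE z‖ ∧ c = ‖toE (W.mulVec z)‖} else 0

/-- `[B, x]`: append the column `x` to `B`. -/
def appendCol {m s : ℕ} (B : Matrix (Fin m) (Fin s) ℝ) (x : E m) :
    Matrix (Fin m) (Fin (s + 1)) ℝ :=
  fun i => Fin.snoc (fun j => B i j) (x i)

/-- `[A, B]`: horizontal concatenation. -/
def appendMat {m k s : ℕ} (A : Matrix (Fin m) (Fin k) ℝ) (B : Matrix (Fin m) (Fin s) ℝ) :
    Matrix (Fin m) (Fin (k + s)) ℝ :=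
  fun i => Fin.append (fun j => A i j) (fun j => B i j)

/-- `ω(P) = min (min_i ‖p_i‖₂, (1/√2) min_{i ≠ j} ‖p_i - p_j‖₂)`. -/
def omegaM {m : ℕ} {k : Type*} [Fintype k] (P : Matrix (Fin m) k ℝ) : ℝ :=
  sInf ({c | ∃ i, c = ‖toE fun a => P a i‖} ∪
    {c | ∃ i j, i ≠ j ∧ c = (Real.sqrt 2)⁻¹ * ‖(toE fun a => P a i) - toE fun a => P a j‖})

/-- `β(W) = min (ν_β(W), γ_β(W)/√2)` as in the paper. -/
def beta {m r : ℕ} (f : E m → ℝ) (W : Matrix (Fin m) (Fin r) ℝ) : ℝ :=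
  sInf ({c | ∃ j : Fin r,
      c = ‖resid f (W.submatrix id fun p : {i // i ≠ j} => (p : Fin r)) (toE fun a => W a j)‖} ∪
    {c | ∃ (i j : Fin r) (J : Finset (Fin r)), i ≠ j ∧ i ∉ J ∧ j ∉ J ∧
      c = (Real.sqrt 2)⁻¹ *
        ‖resid f (W.submatrix id fun p : J => (p : Fin r)) (toE fun a => W a i) -
         resid f (W.submatrix id fun p : J => (p : Fin r)) (toE fun a => W a j)‖})

/-- Singular values of `B` in nonincreasing order (`i`-th largest at index `i`). -/
def singVals {m s : ℕ} (B : Matrix (Fin m) (Fin s) ℝ) : Fin s → ℝ := fun i =>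
  Real.sqrt (((show (B.transpose * B).IsHermitian by simpa using Matrix.isHermitian_conjTranspose_mul_self B).eigenvalues ∘
    Tuple.sort (show (B.transpose * B).IsHermitian by simpa using Matrix.isHermitian_conjTranspose_mul_self B).eigenvalues) i.rev)

/-- The spectral norm `‖N‖₂` (ℓ₂ operator norm). -/
def spec {m s : ℕ} (N : Matrix (Fin m) (Fin s) ℝ) : ℝ :=
  ‖LinearMap.toContinuousLinearMap (Matrix.toEuclideanLin N)‖

theorem stmt6 (m r : ℕ) (Z Zt : Matrix (Fin m) (Fin r) ℝ) (eps : ℝ)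
    (hN : norm12 (Z - Zt) ≤ eps) :
    alpha Z - 2 * eps ≤ alpha Zt := by
  classical
  set D := Z - Zt with hD
  -- column bound
  have hbdd : BddAbove {c | ∃ j, c = ‖toE fun i => D i j‖} := by
    have : {c | ∃ j, c = ‖toE fun i => D i j‖} =
        Set.range (fun j => ‖toE fun i => D i j‖) := by
      ext c; simp [Set.range, eq_comm]
    rw [this]
    exact (Set.finite_range _).bddAbove
  have hcol : ∀ j : Fin r, ‖toE fun i => D i j‖ ≤ eps := by
    intro j
    have h1 : ‖toE fun i => D i j‖ ≤ norm12 D := le_csSup hbdd ⟨j, rfl⟩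
    linarith
  have heps : 0 ≤ eps := by
    rcases Nat.eq_zero_or_pos r with hr | hr
    · have hempty : {c | ∃ j : Fin r, c = ‖toE fun i => D i j‖} = ∅ := by
        ext c; simp only [Set.mem_setOf_eq, Set.mem_empty_iff_false, iff_false]
        rintro ⟨j, -⟩; exact absurd j.2 (by omega)
      have : norm12 D = 0 := by
        unfold norm12; rw [hempty]; exact Real.sSup_empty
      linarith
    · exact le_trans (norm_nonneg _) (hcol ⟨0, hr⟩)
  -- mulVec bound
  have hmul : ∀ x : Fin r → ℝ, x ∈ simplex (Fin r) →
      ‖toE (D.mulVec x)‖ ≤ eps := by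
    intro x hx
    obtain ⟨hx0, hx1⟩ := hx
    have hrw : toE (D.mulVec x) = ∑ j, x j • (toE fun i => D i j) := by
      ext i
      simp [toE, Matrix.mulVec, dotProduct, mul_comm]
    calc ‖toE (D.mulVec x)‖ = ‖∑ j, x j • (toE fun i => D i j)‖ := by rw [hrw]
      _ ≤ ∑ j, ‖x j • (toE fun i => D i j)‖ := norm_sum_le _ _
      _ = ∑ j, x j * ‖toE fun i => D i j‖ := by
          refine Finset.sum_congr rfl fun j _ => ?_
          rw [norm_smul, Real.norm_eq_abs, abs_of_nonneg (hx0 j)]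
      _ ≤ ∑ j, x j * eps := by
          refine Finset.sum_le_sum fun j _ => ?_
          exact mul_le_mul_of_nonneg_left (hcol j) (hx0 j)
      _ = (∑ j, x j) * eps := by rw [Finset.sum_mul]
      _ ≤ 1 * eps := mul_le_mul_of_nonneg_right hx1 heps
      _ = eps := one_mul eps
  rcases Nat.eq_zero_or_pos r with hr | hr
  · have hempty : ∀ W : Matrix (Fin m) (Fin r) ℝ,
        {c | ∃ (j : Fin r) (x : Fin r → ℝ), x ∈ simplex (Fin r) ∧ x j = 0 ∧
          c = ‖toE (fun i => W i j) - toE (W.mulVec x)‖} = ∅ := by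
      intro W
      ext c; simp only [Set.mem_setOf_eq, Set.mem_empty_iff_false, iff_false]
      rintro ⟨j, -⟩; exact absurd j.2 (by omega)
    have h1 : alpha Z = 0 := by unfold alpha; rw [hempty]; exact Real.sInf_empty
    have h2 : alpha Zt = 0 := by unfold alpha; rw [hempty]; exact Real.sInf_empty
    rw [h1, h2]; linarith
  · have hbddb : BddBelow {c | ∃ (j : Fin r) (x : Fin r → ℝ),
        x ∈ simplex (Fin r) ∧ x j = 0 ∧
        c = ‖toE (fun i => Z i j) - toE (Z.mulVec x)‖} := by
      refine ⟨0, ?_⟩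
      rintro c ⟨j, x, -, -, rfl⟩
      exact norm_nonneg _
    have hnonempty : {c | ∃ (j : Fin r) (x : Fin r → ℝ),
        x ∈ simplex (Fin r) ∧ x j = 0 ∧
        c = ‖toE (fun i => Zt i j) - toE (Zt.mulVec x)‖}.Nonempty := by
      refine ⟨_, ⟨⟨0, hr⟩, 0, ⟨fun i => le_refl 0, by simp⟩, rfl, rfl⟩⟩
    unfold alpha
    refine le_csInf hnonempty ?_
    rintro c ⟨j, x, hx, hxj, rfl⟩
    have hmem : ‖toE (fun i => Z i j) - toE (Z.mulVec x)‖ ∈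
        {c | ∃ (j : Fin r) (x : Fin r → ℝ), x ∈ simplex (Fin r) ∧ x j = 0 ∧
          c = ‖toE (fun i => Z i j) - toE (Z.mulVec x)‖} := ⟨j, x, hx, hxj, rfl⟩
    have h1 : sInf _ ≤ ‖toE (fun i => Z i j) - toE (Z.mulVec x)‖ := csInf_le hbddb hmem
    have hcolj : toE (fun i => Z i j) - toE (fun i => Zt i j) = toE fun i => D i j := by
      ext i; simp [toE, hD, Matrix.sub_apply]
    have hmv : toE (Z.mulVec x) - toE (Zt.mulVec x) = toE (D.mulVec x) := by
      ext i; simp [toE, hD, Matrix.sub_mulVec]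
    have htri : ‖toE (fun i => Z i j) - toE (Z.mulVec x)‖ ≤
        ‖toE (fun i => Zt i j) - toE (Zt.mulVec x)‖ + eps + eps := by
      have key : toE (fun i => Z i j) - toE (Z.mulVec x) =
          (toE (fun i => Zt i j) - toE (Zt.mulVec x)) + (toE fun i => D i j)
            - toE (D.mulVec x) := by
        rw [← hcolj, ← hmv]; abel
      rw [key]
      calc ‖_ - toE (D.mulVec x)‖ ≤
          ‖(toE (fun i => Zt i j) - toE (Zt.mulVec x)) + (toE fun i => D i j)‖
            + ‖toE (D.mulVec x)‖ := norm_sub_le _ _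
        _ ≤ ‖toE (fun i => Zt i j) - toE (Zt.mulVec x)‖ + ‖toE fun i => D i j‖
            + ‖toE (D.mulVec x)‖ := by
            have := norm_add_le (toE (fun i => Zt i j) - toE (Zt.mulVec x))
              (toE fun i => D i j)
            linarith
        _ ≤ ‖toE (fun i => Zt i j) - toE (Zt.mulVec x)‖ + eps + eps := by
            have := hcol j; have := hmul x hx; linarith
    linarith
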